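/- Let A be an l × n integer matrix. The following are equivalent: (1) for every finite coloring of ℕ there exist x_1,...,x_n ∈ ℕ, all of the same color, with x_1 a_1 + ⋯ + x_n a_n = 0 where a_1,...,a_n are the columns of A; (2) for every ĪP-set Y and every finite coloring of Y, there exist x_1,...,x_n ∈ Y, all of the same color, with x_1 a_1 + ⋯ + x_n a_n = 0. -/

import Mathlib

/-- `FSbar x` is the set `{∑_{i=1}^N εᵢ xᵢ : N ∈ ℕ, εᵢ ∈ {0,…,i-1}} \ {0}`. -/
def FSbar (x : ℕ → ℕ) : Set ℕ :=
  {s | ∃ N : ℕ, 0 < N ∧ ∃ ε : ℕ → ℕ, (∀ i ∈ Finset.Icc 1 N, ε i < i) ∧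
    s = ∑ i ∈ Finset.Icc 1 N, ε i * x i} \ {0}

/-- An `ĪP`-set: a subset of `ℕ` containing `FSbar x` for some strictly increasing
sequence `x` of positive integers. -/
def IsIPbarSet (A : Set ℕ) : Prop :=
  ∃ x : ℕ → ℕ, StrictMono x ∧ (∀ i, 0 < x i) ∧ FSbar x ⊆ A

/-- Compactness: if a system is partition regular (with `r` colors) on the positive
integers, then there is a uniform bound `K` such that monochromatic solutions can
always be found in `[1, K]`. -/
lemma compactness_bound (l n r : ℕ)
    (A : Matrix (Fin l) (Fin n) ℤ)
    (hL : ∀ c : ℕ → Fin r,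
      ∃ x : Fin n → ℕ, (∀ i, 0 < x i) ∧ (∀ i i', c (x i) = c (x i')) ∧
        ∀ t : Fin l, ∑ i, (x i : ℤ) * A t i = 0) :
    ∃ K : ℕ, ∀ c : ℕ → Fin r,
      ∃ y : Fin n → ℕ, (∀ i, 0 < y i ∧ y i ≤ K) ∧ (∀ i i', c (y i) = c (y i')) ∧
        ∀ t : Fin l, ∑ i, (y i : ℤ) * A t i = 0 := by
  by_contra h
  push_neg at h
  choose cc hy using h
  -- for each K, `cc K` is a coloring such that every bounded solution `y` fails
  have hfail : ∀ K : ℕ, ∀ z : Fin n → ℕ, (∀ i, 0 < z i ∧ z i ≤ K) →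
      (∀ i i', cc K (z i) = cc K (z i')) →
      ¬ (∀ t : Fin l, ∑ i, (z i : ℤ) * A t i = 0) := by
    intro K z hz hmono hsol
    have := hy K z hz hmono
    tauto
  -- take an ultrafilter extending atTop
  let U : Ultrafilter ℕ := Ultrafilter.of Filter.atTop
  have hU : (U : Filter ℕ) ≤ Filter.atTop := Ultrafilter.of_le _
  -- limit coloring
  have hlim : ∀ m : ℕ, ∃ v : Fin r, {K | cc K m = v} ∈ U := by
    intro m
    obtain ⟨v, hv⟩ := (U.map (fun K => cc K m)).eq_pure_of_finite
    refine ⟨v, ?_⟩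
    have h1 : ({v} : Set (Fin r)) ∈ U.map (fun K => cc K m) := by
      rw [hv]; exact Ultrafilter.mem_pure.2 rfl
    rw [Ultrafilter.mem_map] at h1
    simpa [Set.preimage, Set.mem_singleton_iff] using h1
  choose c hc using hlim
  obtain ⟨z, hzpos, hzmono, hzsol⟩ := hL c
  -- the set of K where cc K agrees with c on all z i, and K ≥ max z, is in U
  have hset : (⋂ i : Fin n, {K | cc K (z i) = c (z i)}) ∩
      {K | ∀ i, z i ≤ K} ∈ U := by
    apply Filter.inter_mem
    · exact Filter.iInter_mem.2 fun i => hc (z i)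
    · have : {K | ∀ i, z i ≤ K} ∈ Filter.atTop := by
        exact Filter.mem_of_superset (Filter.mem_atTop (Finset.univ.sup z))
          (fun K hK i => le_trans (Finset.le_sup (Finset.mem_univ i)) hK)
      exact hU this
  obtain ⟨K, hK1, hK2⟩ := U.nonempty_of_mem hset
  simp only [Set.mem_iInter, Set.mem_setOf_eq] at hK1
  exact hfail K z (fun i => ⟨hzpos i, hK2 i⟩)
    (fun i i' => by rw [hK1 i, hK1 i', hzmono i i']) hzsol

/-- The system `A x = 0` (columns `aᵢ = A · i`) is partition regular on the positive
integers iff it is partition regular on every `ĪP`-set. -/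
theorem stmt17 (l n : ℕ) (A : Matrix (Fin l) (Fin n) ℤ) :
    (∀ (r : ℕ) (c : ℕ → Fin r),
      ∃ x : Fin n → ℕ, (∀ i, 0 < x i) ∧ (∀ i i', c (x i) = c (x i')) ∧
        ∀ t : Fin l, ∑ i, (x i : ℤ) * A t i = 0) ↔
    (∀ Y : Set ℕ, IsIPbarSet Y → ∀ (r : ℕ) (c : ℕ → Fin r),
      ∃ x : Fin n → ℕ, (∀ i, x i ∈ Y) ∧ (∀ i i', c (x i) = c (x i')) ∧
        ∀ t : Fin l, ∑ i, (x i : ℤ) * A t i = 0) := by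
  constructor
  · intro hL Y hY r c
    obtain ⟨x, hxm, hxp, hxsub⟩ := hY
    obtain ⟨K, hK⟩ := compactness_bound l n r A (hL r)
    set d := x (K + 1) with hd
    have hdpos : 0 < d := hxp _
    -- multiples k*d, 1 ≤ k ≤ K, are in Y
    have hmul : ∀ k : ℕ, 0 < k → k ≤ K → k * d ∈ Y := by
      intro k hk1 hk2
      apply hxsub
      constructor
      · refine ⟨K + 1, Nat.succ_pos _, fun i => if i = K + 1 then k else 0, ?_, ?_⟩
        · intro i hi
          simp only [Finset.mem_Icc] at hi
          dsimp only
          split_ifs with h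
          · omega
          · omega
        · rw [Finset.sum_eq_single (K + 1)]
          · simp [hd]
          · intro b hb hne
            simp [hne]
          · intro hnot
            exact absurd (Finset.mem_Icc.2 ⟨by omega, le_refl _⟩) hnot
      · simp only [Set.mem_singleton_iff]
        positivity
    obtain ⟨y, hy1, hy2, hy3⟩ := hK (fun m => c (m * d))
    refine ⟨fun i => y i * d, fun i => hmul _ (hy1 i).1 (hy1 i).2, hy2, ?_⟩
    intro t
    have := hy3 t
    calc ∑ i, ((y i * d : ℕ) : ℤ) * A t i
        = (d : ℤ) * ∑ i, (y i : ℤ) * A t i := by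
          rw [Finset.mul_sum]; congr 1; ext i; push_cast; ring
      _ = 0 := by rw [this, mul_zero]
  · intro hR r c
    have hIP : IsIPbarSet {m | 0 < m} := by
      refine ⟨fun i => i + 1, fun a b hab => Nat.add_lt_add_right hab 1,
        fun i => Nat.succ_pos i, ?_⟩
      intro s hs
      rcases hs with ⟨_, hs0⟩
      simp only [Set.mem_singleton_iff] at hs0
      exact Nat.pos_of_ne_zero hs0
    obtain ⟨x, h1, h2, h3⟩ := hR _ hIP r c
    exact ⟨x, h1, h2, h3⟩
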